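/- Let t₁, t₂, t₃ be complex numbers with t₁t₂ + t₂t₃ + t₃t₁ = 3, and let D = {z ∈ ℂ : |z - c| ≤ r} be a closed disk containing t₁, t₂ and t₃. Then 1 ∈ D or −1 ∈ D. -/

import Mathlib

open Complex

lemma key_id (x y : ℂ) (r : ℝ) :
    Complex.normSq ((starRingEnd ℂ) x * y - (r^2 : ℝ)) =
      r^2 * Complex.normSq (x - y) + (Complex.normSq x - r^2) * (Complex.normSq y - r^2) := by
  simp only [Complex.normSq_apply, Complex.mul_re, Complex.mul_im, Complex.sub_re,
    Complex.sub_im, ← Complex.ofReal_pow, Complex.ofReal_re, Complex.ofReal_im,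
    Complex.conj_re, Complex.conj_im]
  ring

lemma inv_bound (c : ℂ) (r : ℝ) (hr : 0 ≤ r) (ζ : ℂ) (hζ : dist ζ c ≤ r)
    (hm : r < ‖c + 1‖) (hζ1 : ζ + 1 ≠ 0) :
    ‖(starRingEnd ℂ) (c+1) - (↑(Complex.normSq (c+1) - r^2) : ℂ) / (ζ + 1)‖ ≤ r := by
  set a := c + 1 with ha
  set K : ℝ := Complex.normSq a - r^2 with hK
  have hns : Complex.normSq (ζ - c) ≤ r^2 := by
    have : ‖ζ - c‖ ≤ r := by rwa [Complex.dist_eq] at hζ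
    nlinarith [Complex.sq_norm (ζ - c), norm_nonneg (ζ - c)]
  have hKpos : 0 < K := by
    have := Complex.sq_norm a
    nlinarith
  have key : Complex.normSq ((starRingEnd ℂ) a * (ζ + 1) - (K : ℂ)) ≤ r^2 * Complex.normSq (ζ + 1) := by
    have e1 : (starRingEnd ℂ) a * (ζ + 1) - (K : ℂ) = -((starRingEnd ℂ) a * (-(ζ - c)) - ((r^2 : ℝ) : ℂ)) := by
      have hc : ((K : ℝ) : ℂ) = (starRingEnd ℂ) a * a - ((r^2 : ℝ) : ℂ) := by
        rw [hK]; push_cast [Complex.normSq_eq_conj_mul_self]; ring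
      rw [hc]; ring
    rw [e1, Complex.normSq_neg, key_id]
    have e2 : a - -(ζ - c) = ζ + 1 := by rw [ha]; ring
    rw [e2, Complex.normSq_neg]
    nlinarith [Complex.normSq_nonneg (ζ + 1)]
  have habs : ‖(starRingEnd ℂ) a * (ζ + 1) - (K : ℂ)‖ ≤ r * ‖ζ + 1‖ := by
    rw [Complex.norm_def, Complex.norm_def]
    calc Real.sqrt (Complex.normSq ((starRingEnd ℂ) a * (ζ + 1) - (K : ℂ)))
        ≤ Real.sqrt (r^2 * Complex.normSq (ζ + 1)) := Real.sqrt_le_sqrt key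
      _ = r * Real.sqrt (Complex.normSq (ζ + 1)) := by
          rw [Real.sqrt_mul (sq_nonneg r), Real.sqrt_sq hr]
  have e3 : (starRingEnd ℂ) a - (K : ℂ) / (ζ + 1) = ((starRingEnd ℂ) a * (ζ + 1) - (K : ℂ)) / (ζ + 1) := by
    field_simp
  rw [e3, norm_div]
  rw [div_le_iff₀ (by simpa using hζ1 : (0:ℝ) < ‖ζ + 1‖) ]
  linarith [habs]

lemma stepB (c : ℂ) (r : ℝ) (hr : 0 ≤ r) (z : ℂ) (hz : z ≠ 0)
    (h1 : dist z c ≤ r) (h2 : dist z⁻¹ c ≤ r)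
    (hp : r < dist 1 c) (hm : r < dist (-1) c) : False := by
  set a := c + 1 with ha
  set K : ℝ := Complex.normSq a - r^2 with hK
  have hma : r < ‖a‖ := by
    rwa [Complex.dist_eq, show (-1 : ℂ) - c = -(c+1) by ring, norm_neg] at hm
  have hpb : r < ‖c - 1‖ := by
    rwa [Complex.dist_eq, show (1 : ℂ) - c = -(c-1) by ring, norm_neg] at hp
  have hz1 : z + 1 ≠ 0 := by
    intro hh
    have : z = -1 := by linear_combination hh
    rw [this] at h1; linarith
  have hw1 : z⁻¹ + 1 ≠ 0 := by
    intro hh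
    have : z⁻¹ = -1 := by linear_combination hh
    rw [this] at h2; linarith
  have b1 := inv_bound c r hr z h1 hma hz1
  have b2 := inv_bound c r hr z⁻¹ h2 hma hw1
  have hprod : (z + 1) * (z⁻¹ + 1) = (z + 1) + (z⁻¹ + 1) := by
    linear_combination mul_inv_cancel₀ hz
  have hsum : (K : ℂ) / (z + 1) + (K : ℂ) / (z⁻¹ + 1) = (K : ℂ) := by
    rw [div_add_div _ _ hz1 hw1, div_eq_iff (mul_ne_zero hz1 hw1)]
    linear_combination (-((K:ℝ) : ℂ)) * mul_inv_cancel₀ hz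
  have tri : ‖2 * (starRingEnd ℂ) a - (K : ℂ)‖ ≤ 2 * r := by
    have e : 2 * (starRingEnd ℂ) a - (K : ℂ)
        = ((starRingEnd ℂ) a - (K : ℂ) / (z + 1)) + ((starRingEnd ℂ) a - (K : ℂ) / (z⁻¹ + 1)) := by
      linear_combination hsum
    rw [e]
    calc ‖_‖ ≤ _ + _ := norm_add_le _ _
      _ ≤ 2 * r := by linarith
  -- rewrite 2*conj a - K as -(conj a * (c-1) - r^2)
  have e4 : 2 * (starRingEnd ℂ) a - (K : ℂ) = -((starRingEnd ℂ) a * (c - 1) - ((r^2 : ℝ) : ℂ)) := by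
    have hc : ((K : ℝ) : ℂ) = (starRingEnd ℂ) a * a - ((r^2 : ℝ) : ℂ) := by
      rw [hK]; push_cast [Complex.normSq_eq_conj_mul_self]; ring
    rw [hc, ha]; ring
  rw [e4, norm_neg] at tri
  have htri2 : Complex.normSq ((starRingEnd ℂ) a * (c - 1) - ((r^2 : ℝ) : ℂ)) ≤ 4 * r^2 := by
    have h0 := norm_nonneg ((starRingEnd ℂ) a * (c - 1) - ((r^2 : ℝ) : ℂ))
    nlinarith [Complex.sq_norm ((starRingEnd ℂ) a * (c - 1) - ((r^2 : ℝ) : ℂ))]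
  rw [key_id a (c-1) r] at htri2
  have e5 : a - (c - 1) = 2 := by rw [ha]; ring
  rw [e5] at htri2
  have h2n : Complex.normSq (2 : ℂ) = 4 := by norm_num [Complex.normSq_apply]
  rw [h2n] at htri2
  have hKpos : 0 < Complex.normSq a - r^2 := by nlinarith [Complex.sq_norm a]
  have hLpos : 0 < Complex.normSq (c-1) - r^2 := by nlinarith [Complex.sq_norm (c-1)]
  nlinarith


lemma rootA (c : ℂ) (r : ℝ) (t₁ t₂ t₃ x : ℂ)
    (h₁ : dist t₁ c ≤ r) (h₂ : dist t₂ c ≤ r) (h₃ : dist t₃ c ≤ r)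
    (hx : (x - t₁) * (x - t₂) + (x - t₂) * (x - t₃) + (x - t₃) * (x - t₁) = 0) :
    dist x c ≤ r := by
  by_contra hcon
  push_neg at hcon
  have hd : r < ‖x - c‖ := by rwa [Complex.dist_eq] at hcon
  have hd0 : 0 < ‖x - c‖ := lt_of_le_of_lt (le_trans dist_nonneg h₁) hd
  have main : ∀ t : ℂ, dist t c ≤ r → 0 < ((x - c) * (x - t)⁻¹).re ∧ x - t ≠ 0 := by
    intro t ht
    have ha : ‖t - c‖ ≤ r := by rwa [Complex.dist_eq] at ht
    have hne : x - t ≠ 0 := by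
      intro hh
      rw [sub_eq_zero] at hh
      rw [hh] at hd
      linarith [(Complex.dist_eq t c) ▸ ht]
    have hnsq : 0 < Complex.normSq (x - t) := Complex.normSq_pos.mpr hne
    have hnum : 0 < ((x - c) * (starRingEnd ℂ) (x - t)).re := by
      have hre : ((x - c) * (starRingEnd ℂ) (x - t)).re
          = Complex.normSq (x - c) - ((x - c) * (starRingEnd ℂ) (t - c)).re := by
        simp only [Complex.mul_re, Complex.conj_re, Complex.conj_im, Complex.sub_re,
          Complex.sub_im, Complex.normSq_apply]
        ring
      have hle : ((x - c) * (starRingEnd ℂ) (t - c)).re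
          ≤ ‖x - c‖ * ‖t - c‖ := by
        calc ((x - c) * (starRingEnd ℂ) (t - c)).re
            ≤ ‖(x - c) * (starRingEnd ℂ) (t - c)‖ := Complex.re_le_norm _
          _ = ‖x - c‖ * ‖t - c‖ := by
              rw [norm_mul, Complex.norm_conj]
      have : ‖x - c‖ * ‖t - c‖ < Complex.normSq (x - c) := by
        rw [← Complex.sq_norm]
        nlinarith
      rw [hre]; linarith
    constructor
    · rw [Complex.inv_def (x - t), ← mul_assoc,
        mul_comm _ ((((Complex.normSq (x-t))⁻¹ : ℝ)) : ℂ), Complex.re_ofReal_mul]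
      positivity
    · exact hne
  obtain ⟨p1, n1⟩ := main t₁ h₁
  obtain ⟨p2, n2⟩ := main t₂ h₂
  obtain ⟨p3, n3⟩ := main t₃ h₃
  have hT : (x - t₁)⁻¹ + (x - t₂)⁻¹ + (x - t₃)⁻¹ = 0 := by
    have hprodne : (x - t₁) * (x - t₂) * (x - t₃) ≠ 0 := mul_ne_zero (mul_ne_zero n1 n2) n3
    have hexp : (x - t₁) * (x - t₂) * (x - t₃) * ((x - t₁)⁻¹ + (x - t₂)⁻¹ + (x - t₃)⁻¹) = 0 := by
      field_simp
      linear_combination hx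
    exact (mul_eq_zero.mp hexp).resolve_left hprodne
  have : 0 < ((x - c) * ((x - t₁)⁻¹ + (x - t₂)⁻¹ + (x - t₃)⁻¹)).re := by
    rw [mul_add, mul_add, Complex.add_re, Complex.add_re]
    linarith
  rw [hT, mul_zero] at this
  simp at this

/-- If t₁t₂ + t₂t₃ + t₃t₁ = 3 and a closed disk D contains t₁, t₂, t₃, then
D contains 1 or -1. -/
theorem closedDisk_contains_pm_one (t₁ t₂ t₃ : ℂ)
    (h : t₁ * t₂ + t₂ * t₃ + t₃ * t₁ = 3)
    (c : ℂ) (r : ℝ) (hr : 0 ≤ r)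
    (h₁ : t₁ ∈ Metric.closedBall c r) (h₂ : t₂ ∈ Metric.closedBall c r)
    (h₃ : t₃ ∈ Metric.closedBall c r) :
    (1 : ℂ) ∈ Metric.closedBall c r ∨ (-1 : ℂ) ∈ Metric.closedBall c r := by
  rw [Metric.mem_closedBall] at h₁ h₂ h₃
  obtain ⟨s, hs⟩ := IsAlgClosed.exists_pow_nat_eq ((t₁ + t₂ + t₃)^2 - 9) (n := 2) (by norm_num)
  set e₁ : ℂ := t₁ + t₂ + t₃ with he₁
  set w : ℂ := (e₁ + s) / 3 with hw
  set v : ℂ := (e₁ - s) / 3 with hv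
  have hwv : w * v = 1 := by
    rw [hw, hv]
    linear_combination (-1/9 : ℂ) * hs
  have hwz : w ≠ 0 := left_ne_zero_of_mul_eq_one hwv
  have hvinv : v = w⁻¹ := eq_inv_of_mul_eq_one_right hwv
  have hrootw : (w - t₁) * (w - t₂) + (w - t₂) * (w - t₃) + (w - t₃) * (w - t₁) = 0 := by
    rw [hw]
    linear_combination (1/3 : ℂ) * hs + h
  have hrootv : (v - t₁) * (v - t₂) + (v - t₂) * (v - t₃) + (v - t₃) * (v - t₁) = 0 := by
    rw [hv]
    linear_combination (1/3 : ℂ) * hs + h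
  have hwin : dist w c ≤ r := rootA c r t₁ t₂ t₃ w h₁ h₂ h₃ hrootw
  have hvin : dist v c ≤ r := rootA c r t₁ t₂ t₃ v h₁ h₂ h₃ hrootv
  rw [hvinv] at hvin
  by_contra hcon
  push_neg at hcon
  obtain ⟨hc1, hc2⟩ := hcon
  rw [Metric.mem_closedBall] at hc1 hc2
  push_neg at hc1 hc2
  exact stepB c r hr w hwz hwin hvin hc1 hc2
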